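/- Let K be a totally real number field of degree n over ℚ with real embeddings σ₁, …, σₙ : K → ℝ. For B = [[a,b],[c,d]] ∈ SL₂(K) and z ∈ ℍ, set Bᵢ·z := (σᵢ(a)·z + σᵢ(b))/(σᵢ(c)·z + σᵢ(d)) ∈ ℍ for i = 1, …, n. Then the set {(B₁·z, B₂·z, …, Bₙ·z) : B ∈ SL₂(K), z ∈ ℍ} (the union of the images of the diagonal Ξₙ = {(z, …, z) : z ∈ ℍ} under the elements of SL₂(K)) is dense in ℍⁿ. -/

import Mathlib

open NumberField

section Aux

variable {K : Type*} [Field K] {n : ℕ} (σ : Fin n → (K →+* ℝ))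

/-- Distinct real embeddings are linearly independent (Dedekind). -/
lemma aux_linearIndependent (hinj : Function.Injective σ) :
    LinearIndependent ℝ (fun i : Fin n => (σ i : K → ℝ)) := by
  have h := linearIndependent_monoidHom K ℝ
  have := h.comp (fun i => (σ i).toMonoidHom) (fun i j hij => by
    apply hinj
    ext x
    exact congrFun (congrArg (fun f : K →* ℝ => (f : K → ℝ)) hij) x)
  exact this

lemma aux_span_top (hinj : Function.Injective σ) :
    Submodule.span ℝ (Set.range (fun x : K => fun i => σ i x)) = ⊤ := by
  by_contra h
  obtain ⟨f, hf0, hfbot⟩ := Submodule.exists_dual_map_eq_bot_of_lt_top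
    (lt_top_iff_ne_top.mpr h) inferInstance
  have hker : ∀ x : K, f (fun i => σ i x) = 0 := by
    intro x
    have hmem : f (fun i => σ i x) ∈
        (Submodule.span ℝ (Set.range (fun x : K => fun i => σ i x))).map f :=
      ⟨_, Submodule.subset_span ⟨x, rfl⟩, rfl⟩
    rw [hfbot] at hmem
    simpa using hmem
  set c : Fin n → ℝ := fun i => f (fun j => if i = j then (1:ℝ) else 0) with hc
  have hrep : ∀ v : Fin n → ℝ, f v = ∑ i, v i * c i := by
    intro v
    conv_lhs => rw [pi_eq_sum_univ v]
    rw [map_sum]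
    refine Finset.sum_congr rfl fun i _ => ?_
    rw [map_smul, smul_eq_mul]
  have hc0 : ∀ x : K, ∑ i, c i * σ i x = 0 := by
    intro x
    have := hker x
    rw [hrep] at this
    rw [← this]
    exact Finset.sum_congr rfl fun i _ => mul_comm _ _
  have hczero : c = 0 := by
    have hli := Fintype.linearIndependent_iff.mp (aux_linearIndependent σ hinj) c
    have : ∑ i, c i • (σ i : K → ℝ) = 0 := by
      funext x
      simpa [Finset.sum_apply] using hc0 x
    funext i
    exact hli this i
  apply hf0
  apply LinearMap.ext
  intro v
  rw [hrep v, hczero]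
  simp

/-- Density of the image of `K` under `n` distinct real embeddings. -/
lemma aux_dense (hinj : Function.Injective σ) :
    Dense (Set.range (fun x : K => fun i => σ i x)) := by
  set S := Set.range (fun x : K => fun i => σ i x) with hS
  -- closure of S is stable under addition
  have hP : ∃ P : AddSubmonoid (Fin n → ℝ), (P : Set (Fin n → ℝ)) = S := by
    refine ⟨{ carrier := S, add_mem' := ?_, zero_mem' := ?_ }, rfl⟩
    · rintro a b ⟨x, rfl⟩ ⟨y, rfl⟩
      exact ⟨x + y, by funext i; simp [map_add]⟩
    · exact ⟨0, by funext i; simp⟩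
  obtain ⟨P, hPS⟩ := hP
  have hadd : ∀ u v : Fin n → ℝ, u ∈ closure S → v ∈ closure S → u + v ∈ closure S := by
    intro u v hu hv
    rw [← hPS] at hu hv ⊢
    exact P.topologicalClosure.add_mem hu hv
  have hzero : (0 : Fin n → ℝ) ∈ closure S :=
    subset_closure ⟨0, by funext i; simp⟩
  -- closure of S is stable under real scalar multiplication
  have hsmul : ∀ (r : ℝ) (v : Fin n → ℝ), v ∈ closure S → r • v ∈ closure S := by
    intro r v hv
    have h1 : ∀ x : K, r • (fun i => σ i x : Fin n → ℝ) ∈ closure S := by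
      intro x
      have hr : r ∈ closure (Set.range ((↑) : ℚ → ℝ)) := Rat.denseRange_cast r
      have hcont : Continuous fun s : ℝ => s • (fun i => σ i x : Fin n → ℝ) :=
        (continuous_id.smul continuous_const)
      have himg : (fun s : ℝ => s • (fun i => σ i x : Fin n → ℝ)) ''
          (Set.range ((↑) : ℚ → ℝ)) ⊆ S := by
        rintro _ ⟨_, ⟨q, rfl⟩, rfl⟩
        refine ⟨(q : K) * x, ?_⟩
        funext i
        simp [map_mul, map_ratCast, mul_comm]
      have := image_closure_subset_closure_image (s := Set.range ((↑) : ℚ → ℝ)) hcont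
      have hmem : r • (fun i => σ i x : Fin n → ℝ) ∈
          closure ((fun s : ℝ => s • (fun i => σ i x : Fin n → ℝ)) ''
            (Set.range ((↑) : ℚ → ℝ))) := this ⟨r, hr, rfl⟩
      exact closure_mono himg hmem
    have hcont : Continuous fun u : Fin n → ℝ => r • u := continuous_const_smul r
    have h2 := image_closure_subset_closure_image (s := S) hcont
    have hmem : r • v ∈ closure ((fun u : Fin n → ℝ => r • u) '' S) := h2 ⟨v, hv, rfl⟩
    have himg : (fun u : Fin n → ℝ => r • u) '' S ⊆ closure S := by
      rintro _ ⟨_, ⟨x, rfl⟩, rfl⟩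
      exact h1 x
    have hfin := closure_mono himg hmem
    rwa [closure_closure] at hfin
  -- therefore closure S is an ℝ-submodule containing the span
  let T : Submodule ℝ (Fin n → ℝ) :=
    { carrier := closure S
      add_mem' := fun hu hv => hadd _ _ hu hv
      zero_mem' := hzero
      smul_mem' := fun r v hv => hsmul r v hv }
  have hle : Submodule.span ℝ S ≤ T := Submodule.span_le.mpr subset_closure
  rw [aux_span_top σ hinj] at hle
  intro v
  exact hle (Submodule.mem_top (x := v))

end Aux

/-- For a totally real number field `K` of degree `n` with real embeddings `σ₁, …, σₙ`,
the union over `B ∈ SL₂(K)` of the images of the diagonal `Ξₙ = {(z, …, z)}` under the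
componentwise Möbius actions `(B₁·z, …, Bₙ·z)` is dense in `ℍⁿ`. -/
theorem diagonal_orbits_dense (K : Type*) [Field K] [NumberField K]
    (n : ℕ) (hdeg : Module.finrank ℚ K = n)
    (σ : Fin n → (K →+* ℝ)) (hinj : Function.Injective σ)
    (hall : ∀ τ : K →+* ℝ, ∃ i, σ i = τ)
    (htotallyReal : ∀ φ : K →+* ℂ, ∀ x : K, (φ x).im = 0) :
    ∀ w : Fin n → ℂ, (∀ i, 0 < (w i).im) →
      w ∈ closure {v : Fin n → ℂ | ∃ (a b c d : K) (z : ℂ),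
        a * d - b * c = 1 ∧ 0 < z.im ∧
        ∀ i, v i = ((σ i a : ℂ) * z + (σ i b : ℂ)) / ((σ i c : ℂ) * z + (σ i d : ℂ))} := by
  intro w hw
  have npos : 0 < n := by
    rw [← hdeg]; exact Module.finrank_pos
  set S := {v : Fin n → ℂ | ∃ (a b c d : K) (z : ℂ),
        a * d - b * c = 1 ∧ 0 < z.im ∧
        ∀ i, v i = ((σ i a : ℂ) * z + (σ i b : ℂ)) / ((σ i c : ℂ) * z + (σ i d : ℂ))} with hSdef
  set R := Set.range (fun x : K => fun i => σ i x) with hR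
  have hdense : Dense R := aux_dense σ hinj
  -- the continuous map
  set F : (Fin n → ℝ) × (Fin n → ℝ) → (Fin n → ℂ) :=
    fun p i => ((p.1 i : ℂ))^2 * Complex.I + (p.1 i : ℂ) * (p.2 i : ℂ) with hF
  have hFcont : Continuous F := by
    apply continuous_pi
    intro i
    have h1 : Continuous fun p : (Fin n → ℝ) × (Fin n → ℝ) => ((p.1 i : ℂ)) :=
      Complex.continuous_ofReal.comp ((continuous_apply i).comp continuous_fst)
    have h2 : Continuous fun p : (Fin n → ℝ) × (Fin n → ℝ) => ((p.2 i : ℂ)) :=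
      Complex.continuous_ofReal.comp ((continuous_apply i).comp continuous_snd)
    exact ((h1.pow 2).mul continuous_const).add (h1.mul h2)
  -- the target point
  set t : Fin n → ℝ := fun i => Real.sqrt ((w i).im) with ht
  set r : Fin n → ℝ := fun i => (w i).re / t i with hr
  have htpos : ∀ i, 0 < t i := fun i => Real.sqrt_pos.mpr (hw i)
  have hFtr : F (t, r) = w := by
    funext i
    have h1 : (t i)^2 = (w i).im := Real.sq_sqrt (hw i).le
    have h2 : t i * r i = (w i).re := by
      rw [mul_comm]
      show (w i).re / t i * t i = (w i).re
      exact div_mul_cancel₀ _ (htpos i).ne'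
    simp only [hF]
    rw [← Complex.re_add_im (w i), ← h1, ← h2]
    push_cast
    ring
  -- open set of positive tuples
  set U : Set (Fin n → ℝ) := {s | ∀ i, 0 < s i} with hU
  have hUopen : IsOpen U := by
    have : U = ⋂ i, (fun s : Fin n → ℝ => s i) ⁻¹' Set.Ioi 0 := by
      ext s; simp [hU, Set.mem_iInter]
    rw [this]
    exact isOpen_iInter_of_finite fun i => (continuous_apply i).isOpen_preimage _ isOpen_Ioi
  have htU : t ∈ U := htpos
  -- the dense data set
  set D : Set ((Fin n → ℝ) × (Fin n → ℝ)) := (U ∩ R) ×ˢ R with hD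
  have htr : (t, r) ∈ closure D := by
    rw [hD, closure_prod_eq]
    exact ⟨hdense.open_subset_closure_inter hUopen htU, hdense r⟩
  -- F maps D into S
  have hFD : F '' D ⊆ S := by
    rintro _ ⟨⟨s, u⟩, ⟨⟨hsU, a, ha⟩, b, hb⟩, rfl⟩
    have hsa : ∀ i, σ i a = s i := fun i => congrFun ha i
    have hub : ∀ i, σ i b = u i := fun i => congrFun hb i
    have hapos : ∀ i, 0 < σ i a := fun i => (hsa i) ▸ hsU i
    have ha0 : a ≠ 0 := by
      intro h
      have := hapos ⟨0, npos⟩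
      rw [h, map_zero] at this
      exact lt_irrefl 0 this
    refine ⟨a, b, 0, a⁻¹, Complex.I, ?_, by simp, ?_⟩
    · rw [mul_inv_cancel₀ ha0, mul_zero, sub_zero]
    · intro i
      have hai : (σ i a : ℝ) ≠ 0 := (hapos i).ne'
      have haiC : ((σ i a : ℝ) : ℂ) ≠ 0 := by exact_mod_cast hai
      rw [map_zero, map_inv₀]
      push_cast
      rw [hsa i, hub i]
      field_simp [hF]
      simp only [hF]
      simp
      ring
  -- conclude
  have : w ∈ closure (F '' D) := by
    rw [← hFtr]
    exact image_closure_subset_closure_image hFcont ⟨(t, r), htr, rfl⟩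
  exact closure_mono hFD this
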